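/- (Corollary 2) Let fleet 1 have parameters (p̄⁽¹⁾, x⁽¹⁾), fleet 2 have parameters (p̄⁽²⁾, x⁽²⁾), and let the aggregate fleet (p̄, x) be their concatenation. Then for every p ≥ 0 the aggregate capacity curve satisfies Ω_{p̄,x}(p) = sup{E ≥ 0 : (p,E) ∉ F^∁₁ ⊕ F^∁₂}, where F^∁ⱼ is the complement of the flexibility of fleet j relative to [0,∞)² and ⊕ denotes the Minkowski sum. -/

import Mathlib

open MeasureTheory Set Finset Pointwise

/-- The E-p transform of a signal `P`: the energy required above power rating `p`. -/
noncomputable def EpTransform (P : ℝ → ℝ) (p : ℝ) : ℝ :=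
  ∫ t in Set.Ioi (0:ℝ), max (P t - p) 0

/-- The worst-case reference signal `R_{p̄,x}(t) = Σᵢ p̄ᵢ·𝟙[0 ≤ t < xᵢ]`. -/
noncomputable def worstCase {n : ℕ} (pbar x : Fin n → ℝ) (t : ℝ) : ℝ :=
  ∑ i, if 0 ≤ t ∧ t < x i then pbar i else 0

/-- The discharging capacity curve `Ω_{p̄,x}`. -/
noncomputable def capacity {n : ℕ} (pbar x : Fin n → ℝ) (p : ℝ) : ℝ :=
  EpTransform (worstCase pbar x) p

/-- The complement of the flexibility relative to the quadrant `[0,∞)²`. -/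
noncomputable def flexibilityCompl {n : ℕ} (pbar x : Fin n → ℝ) : Set (ℝ × ℝ) :=
  {q : ℝ × ℝ | 0 ≤ q.1 ∧ 0 ≤ q.2 ∧ capacity pbar x q.1 < q.2}

/-! ### Auxiliary lemmas -/

section Fleet
variable {n : ℕ} (pbar x : Fin n → ℝ)

lemma worstCase_measurable : Measurable (worstCase pbar x) := by
  unfold worstCase
  refine Finset.measurable_sum _ (fun i _ => ?_)
  have : MeasurableSet {t : ℝ | 0 ≤ t ∧ t < x i} := by
    have : {t : ℝ | 0 ≤ t ∧ t < x i} = Set.Ico 0 (x i) := rfl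
    rw [this]; exact measurableSet_Ico
  exact Measurable.ite this measurable_const measurable_const

lemma worstCase_nonneg (hp : ∀ i, 0 < pbar i) (t : ℝ) : 0 ≤ worstCase pbar x t := by
  refine Finset.sum_nonneg fun i _ => ?_
  split
  · exact (hp i).le
  · exact le_rfl

lemma worstCase_le_sum (hp : ∀ i, 0 < pbar i) (t : ℝ) : worstCase pbar x t ≤ ∑ i, pbar i := by
  refine Finset.sum_le_sum fun i _ => ?_
  split
  · exact le_rfl
  · exact (hp i).le

lemma worstCase_anti (hp : ∀ i, 0 < pbar i) {s t : ℝ} (h0 : 0 ≤ s) (hst : s ≤ t) :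
    worstCase pbar x t ≤ worstCase pbar x s := by
  refine Finset.sum_le_sum fun i _ => ?_
  by_cases h : 0 ≤ t ∧ t < x i
  · rw [if_pos h, if_pos ⟨h0, lt_of_le_of_lt hst h.2⟩]
  · rw [if_neg h]
    split
    · exact (hp i).le
    · exact le_rfl

lemma worstCase_eq_zero {t : ℝ} (h : ∀ i, x i ≤ t) : worstCase pbar x t = 0 := by
  refine Finset.sum_eq_zero fun i _ => ?_
  rw [if_neg]; rintro ⟨-, h2⟩; exact absurd (h i) (not_le.2 h2)

lemma worstCase_const {s t : ℝ} (h0 : 0 ≤ s) (hst : s ≤ t)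
    (h : ∀ i, ¬(s < x i ∧ x i ≤ t)) : worstCase pbar x t = worstCase pbar x s := by
  unfold worstCase
  refine Finset.sum_congr rfl fun i _ => ?_
  by_cases hi : s < x i
  · have : t < x i := lt_of_not_ge fun hle => h i ⟨hi, hle⟩
    rw [if_pos ⟨le_trans h0 hst, this⟩, if_pos ⟨h0, hi⟩]
  · rw [if_neg, if_neg]
    · rintro ⟨-, h2⟩; exact hi h2
    · rintro ⟨-, h2⟩; exact hi (lt_of_le_of_lt hst h2)

lemma capacity_nonneg (p : ℝ) : 0 ≤ capacity pbar x p :=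
  setIntegral_nonneg measurableSet_Ioi fun t _ => le_max_right _ _

lemma maxsub_integrableOn (hp : ∀ i, 0 < pbar i) (hx : ∀ i, 0 ≤ x i) {p : ℝ} (hpnn : 0 ≤ p) :
    IntegrableOn (fun t => max (worstCase pbar x t - p) 0) (Set.Ioi (0:ℝ)) := by
  set M : ℝ := ∑ i, x i with hM
  set C : ℝ := ∑ i, pbar i with hC
  have hCnn : 0 ≤ C := Finset.sum_nonneg fun i _ => (hp i).le
  have hxM : ∀ i, x i ≤ M := fun i =>
    Finset.single_le_sum (fun j _ => hx j) (Finset.mem_univ i)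
  have hmeas : Measurable fun t => max (worstCase pbar x t - p) 0 :=
    ((worstCase_measurable pbar x).sub measurable_const).max measurable_const
  have hg : Integrable ((Set.Ioc (0:ℝ) M).indicator fun _ => C)
      (volume.restrict (Set.Ioi (0:ℝ))) := by
    refine Integrable.integrableOn ?_
    rw [integrable_indicator_iff measurableSet_Ioc]
    exact integrableOn_const measure_Ioc_lt_top.ne
  refine Integrable.mono' hg hmeas.aestronglyMeasurable ?_
  rw [ae_restrict_iff' measurableSet_Ioi]
  refine ae_of_all _ fun t ht => ?_
  have hfnn : 0 ≤ max (worstCase pbar x t - p) 0 := le_max_right _ _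
  rw [Real.norm_of_nonneg hfnn]
  by_cases htM : t ≤ M
  · rw [Set.indicator_of_mem (show t ∈ Set.Ioc 0 M from ⟨Set.mem_Ioi.1 ht, htM⟩) (fun _ => C)]
    refine max_le ?_ hCnn
    have := worstCase_le_sum pbar x hp t
    linarith
  · rw [Set.indicator_of_notMem (fun h => htM h.2)]
    have h0 : worstCase pbar x t = 0 :=
      worstCase_eq_zero pbar x fun i => le_trans (hxM i) (not_le.1 htM).le
    rw [h0]
    have : max (0 - p) 0 = 0 := max_eq_right (by linarith)
    rw [this]

end Fleet

lemma worstCase_append {n m : ℕ} (pbar1 x1 : Fin n → ℝ) (pbar2 x2 : Fin m → ℝ) (t : ℝ) :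
    worstCase (Fin.append pbar1 pbar2) (Fin.append x1 x2) t =
      worstCase pbar1 x1 t + worstCase pbar2 x2 t := by
  unfold worstCase
  rw [Fin.sum_univ_add]
  simp [Fin.append_left, Fin.append_right]

lemma exists_eps {k : ℕ} (X : Fin k → ℝ) (c : ℝ) :
    ∃ ε > 0, ∀ i, ¬(c < X i ∧ X i ≤ c + ε) := by
  classical
  by_cases h : (Finset.univ.filter (fun i => c < X i)).Nonempty
  · set F := Finset.univ.filter (fun i => c < X i) with hF
    have hlt : c < F.inf' h X := (Finset.lt_inf'_iff h).2 fun i hi => (Finset.mem_filter.1 hi).2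
    refine ⟨(F.inf' h X - c) / 2, by linarith, fun i hi => ?_⟩
    have hiF : i ∈ F := Finset.mem_filter.2 ⟨Finset.mem_univ i, hi.1⟩
    have := Finset.inf'_le X hiF
    have := hi.2
    linarith
  · exact ⟨1, one_pos, fun i hi =>
      h ⟨i, Finset.mem_filter.2 ⟨Finset.mem_univ i, hi.1⟩⟩⟩

lemma exists_delta {k : ℕ} (X : Fin k → ℝ) {c : ℝ} (hc : 0 < c) :
    ∃ δ > 0, 0 < c - δ ∧ ∀ i, ¬(c - δ < X i ∧ X i < c) := by
  classical
  by_cases h : (Finset.univ.filter (fun i => X i < c)).Nonempty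
  · set F := Finset.univ.filter (fun i => X i < c) with hF
    have hlt : F.sup' h X < c := (Finset.sup'_lt_iff h).2 fun i hi => (Finset.mem_filter.1 hi).2
    refine ⟨min (c / 2) ((c - F.sup' h X) / 2), lt_min (by linarith) (by linarith), ?_,
      fun i hi => ?_⟩
    · have := min_le_left (c / 2) ((c - F.sup' h X) / 2)
      linarith
    · have hiF : i ∈ F := Finset.mem_filter.2 ⟨Finset.mem_univ i, hi.2⟩
      have h3 := Finset.le_sup' X hiF
      have h4 := min_le_right (c / 2) ((c - F.sup' h X) / 2)
      have := hi.1
      linarith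
  · exact ⟨c / 2, by linarith, by linarith, fun i hi =>
      h ⟨i, Finset.mem_filter.2 ⟨Finset.mem_univ i, hi.2⟩⟩⟩

lemma ge_on_left {k : ℕ} (P X : Fin k → ℝ) (hp : ∀ i, 0 < P i) {c s t : ℝ}
    (hs : 0 ≤ s) (hfree : ∀ i, ¬(s < X i ∧ X i < c)) (ht0 : 0 < t) (htc : t < c) :
    worstCase P X s ≤ worstCase P X t := by
  rcases le_or_gt t s with h | h
  · exact worstCase_anti P X hp ht0.le h
  · exact le_of_eq (worstCase_const P X hs h.le
      (fun i hi => hfree i ⟨hi.1, lt_of_le_of_lt hi.2 htc⟩)).symm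

lemma le_on_right {k : ℕ} (P X : Fin k → ℝ) (hp : ∀ i, 0 < P i) {c u t : ℝ}
    (hc : 0 ≤ c) (hcu : c < u) (hfree : ∀ i, ¬(c < X i ∧ X i ≤ u)) (ht : c < t) :
    worstCase P X t ≤ worstCase P X u := by
  rcases le_or_gt u t with h | h
  · exact worstCase_anti P X hp (le_trans hc hcu.le) h
  · exact le_of_eq (worstCase_const P X (le_trans hc ht.le) h.le
      (fun i hi => hfree i ⟨lt_trans ht hi.1, hi.2⟩)).symm

lemma capacity_append_le {n m : ℕ} (pbar1 x1 : Fin n → ℝ) (pbar2 x2 : Fin m → ℝ)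
    (hp1 : ∀ i, 0 < pbar1 i) (hx1 : ∀ i, 0 ≤ x1 i)
    (hp2 : ∀ i, 0 < pbar2 i) (hx2 : ∀ i, 0 ≤ x2 i)
    {p1 p2 : ℝ} (h1 : 0 ≤ p1) (h2 : 0 ≤ p2) :
    capacity (Fin.append pbar1 pbar2) (Fin.append x1 x2) (p1 + p2) ≤
      capacity pbar1 x1 p1 + capacity pbar2 x2 p2 := by
  have hint1 := maxsub_integrableOn pbar1 x1 hp1 hx1 h1
  have hint2 := maxsub_integrableOn pbar2 x2 hp2 hx2 h2
  have hpX : ∀ i, 0 < Fin.append pbar1 pbar2 i := fun i => by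
    refine Fin.addCases (fun j => ?_) (fun j => ?_) i
    · rw [Fin.append_left]; exact hp1 j
    · rw [Fin.append_right]; exact hp2 j
  have hxX : ∀ i, 0 ≤ Fin.append x1 x2 i := fun i => by
    refine Fin.addCases (fun j => ?_) (fun j => ?_) i
    · rw [Fin.append_left]; exact hx1 j
    · rw [Fin.append_right]; exact hx2 j
  unfold capacity EpTransform
  rw [← integral_add hint1 hint2]
  refine integral_mono
    (maxsub_integrableOn _ _ hpX hxX (add_nonneg h1 h2)) (hint1.add hint2) fun t => ?_
  simp only
  rw [worstCase_append]
  refine max_le ?_ (add_nonneg (le_max_right _ _) (le_max_right _ _))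
  have l1 := le_max_left (worstCase pbar1 x1 t - p1) 0
  have l2 := le_max_left (worstCase pbar2 x2 t - p2) 0
  linarith

lemma capacity_append_split {n m : ℕ} (pbar1 x1 : Fin n → ℝ) (pbar2 x2 : Fin m → ℝ)
    (hp1 : ∀ i, 0 < pbar1 i) (hx1 : ∀ i, 0 ≤ x1 i)
    (hp2 : ∀ i, 0 < pbar2 i) (hx2 : ∀ i, 0 ≤ x2 i)
    {p : ℝ} (hp : 0 ≤ p) :
    ∃ p1 p2, 0 ≤ p1 ∧ 0 ≤ p2 ∧ p1 + p2 = p ∧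
      capacity (Fin.append pbar1 pbar2) (Fin.append x1 x2) p =
        capacity pbar1 x1 p1 + capacity pbar2 x2 p2 := by
  set X := Fin.append x1 x2 with hX
  set P := Fin.append pbar1 pbar2 with hP
  have hpX : ∀ i, 0 < P i := fun i => by
    refine Fin.addCases (fun j => ?_) (fun j => ?_) i
    · rw [hP, Fin.append_left]; exact hp1 j
    · rw [hP, Fin.append_right]; exact hp2 j
  have hxX : ∀ i, 0 ≤ X i := fun i => by
    refine Fin.addCases (fun j => ?_) (fun j => ?_) i
    · rw [hX, Fin.append_left]; exact hx1 j
    · rw [hX, Fin.append_right]; exact hx2 j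
  have happ : ∀ t, worstCase P X t = worstCase pbar1 x1 t + worstCase pbar2 x2 t :=
    fun t => by rw [hP, hX]; exact worstCase_append pbar1 x1 pbar2 x2 t
  set S : Set ℝ := {t | 0 < t ∧ p < worstCase P X t} with hS
  have hSbdd : BddAbove S := by
    refine ⟨∑ i, X i, fun t ht => ?_⟩
    by_contra hlt
    push_neg at hlt
    have hz : worstCase P X t = 0 := worstCase_eq_zero P X fun i =>
      le_trans (Finset.single_le_sum (fun j _ => hxX j) (Finset.mem_univ i)) hlt.le
    have h2 := ht.2
    rw [hz] at h2
    exact absurd h2 (not_lt.2 hp)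
  by_cases hSne : S.Nonempty
  · -- nontrivial threshold
    set c := sSup S with hc
    obtain ⟨t0, ht0⟩ := hSne
    have hc0 : 0 < c := lt_of_lt_of_le ht0.1 (le_csSup hSbdd ht0)
    have hgt : ∀ t, 0 < t → t < c → p < worstCase P X t := fun t ht htc => by
      obtain ⟨r, hrS, hr⟩ := exists_lt_of_lt_csSup ⟨t0, ht0⟩ htc
      exact lt_of_lt_of_le hrS.2 (worstCase_anti P X hpX ht.le hr.le)
    have hle : ∀ t, c < t → worstCase P X t ≤ p := fun t htc => by
      by_contra hlt
      push_neg at hlt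
      exact absurd (le_csSup hSbdd ⟨lt_trans hc0 htc, hlt⟩) (not_le.2 htc)
    obtain ⟨ε, hε, hfreeR⟩ := exists_eps X c
    obtain ⟨δ, hδ, hsδ, hfreeL⟩ := exists_delta X hc0
    set u := c + ε with hu
    set s := c - δ with hs
    have hfree1R : ∀ j : Fin n, ¬(c < x1 j ∧ x1 j ≤ u) := fun j => by
      have := hfreeR (Fin.castAdd m j)
      rwa [hX, Fin.append_left] at this
    have hfree2R : ∀ j : Fin m, ¬(c < x2 j ∧ x2 j ≤ u) := fun j => by
      have := hfreeR (Fin.natAdd n j)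
      rwa [hX, Fin.append_right] at this
    have hfree1L : ∀ j : Fin n, ¬(s < x1 j ∧ x1 j < c) := fun j => by
      have := hfreeL (Fin.castAdd m j)
      rwa [hX, Fin.append_left] at this
    have hfree2L : ∀ j : Fin m, ¬(s < x2 j ∧ x2 j < c) := fun j => by
      have := hfreeL (Fin.natAdd n j)
      rwa [hX, Fin.append_right] at this
    set a1 := worstCase pbar1 x1 u with ha1
    set a2 := worstCase pbar2 x2 u with ha2
    set b1 := worstCase pbar1 x1 s with hb1
    set b2 := worstCase pbar2 x2 s with hb2
    have hs0 : 0 < s := hsδ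
    have hsu : s ≤ u := by linarith
    have hab1 : a1 ≤ b1 := worstCase_anti pbar1 x1 hp1 hs0.le hsu
    have hab2 : a2 ≤ b2 := worstCase_anti pbar2 x2 hp2 hs0.le hsu
    have hap : a1 + a2 ≤ p := by
      have h := hle u (by linarith)
      rw [happ u] at h
      exact h
    have hpb : p < b1 + b2 := by
      have h := hgt s hs0 (by linarith)
      rw [happ s] at h
      exact h
    have ha1nn : 0 ≤ a1 := worstCase_nonneg pbar1 x1 hp1 u
    have ha2nn : 0 ≤ a2 := worstCase_nonneg pbar2 x2 hp2 u
    obtain ⟨q1, q2, hq1a, hq1b, hq2a, hq2b, hsum⟩ :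
        ∃ q1 q2, a1 ≤ q1 ∧ q1 ≤ b1 ∧ a2 ≤ q2 ∧ q2 ≤ b2 ∧ q1 + q2 = p := by
      refine ⟨a1 + min (p - (a1 + a2)) (b1 - a1),
        p - (a1 + min (p - (a1 + a2)) (b1 - a1)), ?_, ?_, ?_, ?_, by ring⟩
      · have : 0 ≤ min (p - (a1 + a2)) (b1 - a1) := le_min (by linarith) (by linarith)
        linarith
      · have := min_le_right (p - (a1 + a2)) (b1 - a1)
        linarith
      · have := min_le_left (p - (a1 + a2)) (b1 - a1)
        linarith
      · rcases le_total (p - (a1 + a2)) (b1 - a1) with h | h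
        · rw [min_eq_left h]; linarith
        · rw [min_eq_right h]; linarith
    have hq1nn : 0 ≤ q1 := le_trans ha1nn hq1a
    have hq2nn : 0 ≤ q2 := le_trans ha2nn hq2a
    refine ⟨q1, q2, hq1nn, hq2nn, hsum, ?_⟩
    unfold capacity EpTransform
    have hint1 := maxsub_integrableOn pbar1 x1 hp1 hx1 hq1nn
    have hint2 := maxsub_integrableOn pbar2 x2 hp2 hx2 hq2nn
    rw [← integral_add hint1 hint2]
    refine integral_congr_ae ?_
    have hne : ∀ᵐ t ∂(volume.restrict (Set.Ioi (0:ℝ))), t ≠ c := by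
      refine Filter.Eventually.filter_mono (ae_mono Measure.restrict_le_self) ?_
      refine ae_iff.2 ?_
      have h2 : {a : ℝ | ¬a ≠ c} = {c} := by ext; simp
      rw [h2]; exact Real.volume_singleton
    have hmem : ∀ᵐ t ∂(volume.restrict (Set.Ioi (0:ℝ))), t ∈ Set.Ioi (0:ℝ) :=
      ae_restrict_mem measurableSet_Ioi
    filter_upwards [hne, hmem] with t htne ht
    have ht0 : 0 < t := Set.mem_Ioi.1 ht
    rcases lt_or_gt_of_ne htne with hlt | hgt'
    · -- 0 < t < c : everything is above the ratings
      have hR1 : b1 ≤ worstCase pbar1 x1 t :=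
        ge_on_left pbar1 x1 hp1 hs0.le hfree1L ht0 hlt
      have hR2 : b2 ≤ worstCase pbar2 x2 t :=
        ge_on_left pbar2 x2 hp2 hs0.le hfree2L ht0 hlt
      have hRt : p < worstCase P X t := hgt t ht0 hlt
      rw [happ t] at hRt
      rw [happ t, max_eq_left (by linarith), max_eq_left (by linarith),
        max_eq_left (by linarith)]
      linarith
    · -- t > c : everything is below the ratings
      have hR1 : worstCase pbar1 x1 t ≤ a1 :=
        le_on_right pbar1 x1 hp1 hc0.le (by linarith) hfree1R hgt'
      have hR2 : worstCase pbar2 x2 t ≤ a2 :=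
        le_on_right pbar2 x2 hp2 hc0.le (by linarith) hfree2R hgt'
      have hRt : worstCase P X t ≤ p := hle t hgt'
      rw [max_eq_right (by linarith), max_eq_right (by linarith),
        max_eq_right (by linarith)]
      norm_num
  · -- the aggregate signal never exceeds p
    have hle : ∀ t, 0 < t → worstCase P X t ≤ p := fun t ht => by
      by_contra h
      push_neg at h
      exact hSne ⟨t, ht, h⟩
    obtain ⟨ε, hε, hfreeR⟩ := exists_eps X 0
    have hfreeR' : ∀ i, ¬((0:ℝ) < X i ∧ X i ≤ ε) := by
      simpa using hfreeR
    have hfree1R : ∀ j : Fin n, ¬((0:ℝ) < x1 j ∧ x1 j ≤ ε) := fun j => by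
      have := hfreeR' (Fin.castAdd m j)
      rwa [hX, Fin.append_left] at this
    have hfree2R : ∀ j : Fin m, ¬((0:ℝ) < x2 j ∧ x2 j ≤ ε) := fun j => by
      have := hfreeR' (Fin.natAdd n j)
      rwa [hX, Fin.append_right] at this
    set a1 := worstCase pbar1 x1 ε with ha1
    set a2 := worstCase pbar2 x2 ε with ha2
    have ha1nn : 0 ≤ a1 := worstCase_nonneg pbar1 x1 hp1 ε
    have ha2nn : 0 ≤ a2 := worstCase_nonneg pbar2 x2 hp2 ε
    have hap : a1 + a2 ≤ p := by
      have h := hle ε hε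
      rw [happ ε] at h
      exact h
    refine ⟨a1 + (p - (a1 + a2)), a2, by linarith, ha2nn, by ring, ?_⟩
    have hz : ∀ t ∈ Set.Ioi (0:ℝ), max (worstCase P X t - p) 0 = 0 := fun t ht =>
      max_eq_right (by linarith [hle t (Set.mem_Ioi.1 ht)])
    have hz1 : ∀ t ∈ Set.Ioi (0:ℝ),
        max (worstCase pbar1 x1 t - (a1 + (p - (a1 + a2)))) 0 = 0 := fun t ht => by
      have := le_on_right pbar1 x1 hp1 le_rfl hε hfree1R (Set.mem_Ioi.1 ht)
      exact max_eq_right (by linarith)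
    have hz2 : ∀ t ∈ Set.Ioi (0:ℝ), max (worstCase pbar2 x2 t - a2) 0 = 0 := fun t ht => by
      have := le_on_right pbar2 x2 hp2 le_rfl hε hfree2R (Set.mem_Ioi.1 ht)
      exact max_eq_right (by linarith)
    unfold capacity EpTransform
    rw [setIntegral_congr_fun measurableSet_Ioi hz,
      setIntegral_congr_fun measurableSet_Ioi hz1,
      setIntegral_congr_fun measurableSet_Ioi hz2]
    simp

/-- Corollary 2: the capacity curve of the aggregate (concatenated) fleet is obtained from
the Minkowski sum of the complementary flexibilities of the two sub-fleets. -/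
theorem aggregate_capacity_eq_sSup {n m : ℕ}
    (pbar1 x1 : Fin n → ℝ) (pbar2 x2 : Fin m → ℝ)
    (hp1 : ∀ i, 0 < pbar1 i) (hx1 : ∀ i, 0 ≤ x1 i)
    (hp2 : ∀ i, 0 < pbar2 i) (hx2 : ∀ i, 0 ≤ x2 i) :
    ∀ p ≥ (0:ℝ),
      capacity (Fin.append pbar1 pbar2) (Fin.append x1 x2) p =
        sSup {E : ℝ | 0 ≤ E ∧
          (p, E) ∉ flexibilityCompl pbar1 x1 + flexibilityCompl pbar2 x2} := by
  intro p hp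
  set C := capacity (Fin.append pbar1 pbar2) (Fin.append x1 x2) p with hC
  have hc0 : 0 ≤ C := capacity_nonneg _ _ p
  have hset : {E : ℝ | 0 ≤ E ∧
      (p, E) ∉ flexibilityCompl pbar1 x1 + flexibilityCompl pbar2 x2} = Set.Icc 0 C := by
    ext E
    simp only [Set.mem_setOf_eq, Set.mem_Icc]
    constructor
    · rintro ⟨hE0, hnotin⟩
      refine ⟨hE0, ?_⟩
      by_contra hEc
      push_neg at hEc
      obtain ⟨q1, q2, h1, h2, hsum, heq⟩ :=
        capacity_append_split pbar1 x1 pbar2 x2 hp1 hx1 hp2 hx2 hp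
      rw [← hC] at heq
      refine hnotin ?_
      have hmem1 : (q1, capacity pbar1 x1 q1 + (E - C) / 2) ∈ flexibilityCompl pbar1 x1 := by
        simp only [flexibilityCompl, Set.mem_setOf_eq]
        refine ⟨h1, ?_, by linarith⟩
        have := capacity_nonneg pbar1 x1 q1
        linarith
      have hmem2 : (q2, capacity pbar2 x2 q2 + (E - C) / 2) ∈ flexibilityCompl pbar2 x2 := by
        simp only [flexibilityCompl, Set.mem_setOf_eq]
        refine ⟨h2, ?_, by linarith⟩
        have := capacity_nonneg pbar2 x2 q2
        linarith
      have hEq : (p, E) = (q1, capacity pbar1 x1 q1 + (E - C) / 2) +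
          (q2, capacity pbar2 x2 q2 + (E - C) / 2) := by
        simp only [Prod.mk_add_mk, Prod.mk.injEq]
        constructor
        · linarith
        · linarith
      rw [hEq]
      exact Set.add_mem_add hmem1 hmem2
    · rintro ⟨hE0, hEle⟩
      refine ⟨hE0, fun hmem => ?_⟩
      rw [Set.mem_add] at hmem
      obtain ⟨q1, hq1, q2, hq2, hsum⟩ := hmem
      simp only [flexibilityCompl, Set.mem_setOf_eq] at hq1 hq2
      obtain ⟨hq1p, hq1E, hq1c⟩ := hq1
      obtain ⟨hq2p, hq2E, hq2c⟩ := hq2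
      have hps : q1.1 + q2.1 = p := by
        have := congrArg Prod.fst hsum
        simpa using this
      have hEs : q1.2 + q2.2 = E := by
        have := congrArg Prod.snd hsum
        simpa using this
      have hle := capacity_append_le pbar1 x1 pbar2 x2 hp1 hx1 hp2 hx2 hq1p hq2p
      rw [hps, ← hC] at hle
      linarith
  rw [hset]
  exact (csSup_Icc hc0).symm
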